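/- Let Ω ⊆ ℝⁿ be a convex set with 0 ∈ Ω, let 𝒜 be a set of linear maps from ℝⁿ to ℝⁿ, and let 0 ≤ c < 1 satisfy ⋃_{A ∈ 𝒜} A '' Ω ⊆ c • Ω. Let D ⊆ ℝⁿ and define Φ(S) := convexHull( ⋃_{A ∈ 𝒜} A '' S ) + D (Minkowski sum). Suppose S ⊆ ℝⁿ and ε ≥ 0 satisfy the ε-stopping condition Φ(S) ⊆ S + ε • Ω. Then the inflated set E := S + (ε/(1 − c)) • Ω is robust positively invariant: Φ(E) ⊆ E. -/

import Mathlib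

open Pointwise

/-- If `⋃_{A ∈ 𝒜} A '' Ω ⊆ c • Ω` with `0 ≤ c < 1` and the ε-stopping
condition `Φ(S) ⊆ S + ε • Ω` holds, where `Φ(S) = co(⋃_{A ∈ 𝒜} A '' S) + D`, then the
inflated set `E = S + (ε/(1 - c)) • Ω` is robust positively invariant: `Φ(E) ⊆ E`. -/
theorem stmt11 {n : ℕ} (Ω : Set (Fin n → ℝ)) (hΩconv : Convex ℝ Ω)
    (hΩ0 : (0 : Fin n → ℝ) ∈ Ω)
    (𝒜 : Set ((Fin n → ℝ) →ₗ[ℝ] (Fin n → ℝ)))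
    (c : ℝ) (hc0 : 0 ≤ c) (hc1 : c < 1) (hA : (⋃ A ∈ 𝒜, A '' Ω) ⊆ c • Ω)
    (D : Set (Fin n → ℝ))
    (Φ : Set (Fin n → ℝ) → Set (Fin n → ℝ))
    (hΦ : ∀ X, Φ X = convexHull ℝ (⋃ A ∈ 𝒜, A '' X) + D)
    (S : Set (Fin n → ℝ)) (ε : ℝ) (hε : 0 ≤ ε)
    (hstop : Φ S ⊆ S + ε • Ω)
    (E : Set (Fin n → ℝ)) (hE : E = S + (ε / (1 - c)) • Ω) :
    Φ E ⊆ E := by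
  set α : ℝ := ε / (1 - c) with hα
  have h1c : (0:ℝ) < 1 - c := by linarith
  have hα0 : 0 ≤ α := div_nonneg hε h1c.le
  -- step 1: union over A of A '' E ⊆ (union over A of A '' S) + (α*c) • Ω
  have hstep1 : (⋃ A ∈ 𝒜, A '' E) ⊆ (⋃ A ∈ 𝒜, A '' S) + (α * c) • Ω := by
    rintro x hx
    simp only [Set.mem_iUnion] at hx
    obtain ⟨A, hAmem, y, hy, rfl⟩ := hx
    rw [hE] at hy
    obtain ⟨s, hs, w, hw, rfl⟩ := hy
    obtain ⟨ω, hω, rfl⟩ := hw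
    have hAω : A ω ∈ c • Ω := hA (Set.mem_iUnion.2 ⟨A, Set.mem_iUnion.2
      ⟨hAmem, Set.mem_image_of_mem A hω⟩⟩)
    obtain ⟨ω', hω', hω'eq⟩ := hAω
    refine ⟨A s, Set.mem_iUnion.2 ⟨A, Set.mem_iUnion.2 ⟨hAmem, Set.mem_image_of_mem A hs⟩⟩,
      (α * c) • ω', ⟨ω', hω', rfl⟩, ?_⟩
    rw [map_add, map_smul, ← hω'eq, smul_smul]
  -- step 2: convex hulls
  have hconvΩ : Convex ℝ ((α * c) • Ω) := hΩconv.smul _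
  have hstep2 : convexHull ℝ (⋃ A ∈ 𝒜, A '' E) ⊆
      convexHull ℝ (⋃ A ∈ 𝒜, A '' S) + (α * c) • Ω := by
    calc convexHull ℝ (⋃ A ∈ 𝒜, A '' E)
        ⊆ convexHull ℝ ((⋃ A ∈ 𝒜, A '' S) + (α * c) • Ω) := convexHull_mono hstep1
      _ = convexHull ℝ (⋃ A ∈ 𝒜, A '' S) + convexHull ℝ ((α * c) • Ω) := convexHull_add _ _
      _ = convexHull ℝ (⋃ A ∈ 𝒜, A '' S) + (α * c) • Ω := by rw [hconvΩ.convexHull_eq]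
  have key : ε + α * c = α := by
    rw [hα]
    field_simp [h1c.ne']
    ring
  calc Φ E = convexHull ℝ (⋃ A ∈ 𝒜, A '' E) + D := hΦ E
    _ ⊆ (convexHull ℝ (⋃ A ∈ 𝒜, A '' S) + (α * c) • Ω) + D :=
        Set.add_subset_add_right hstep2
    _ = (convexHull ℝ (⋃ A ∈ 𝒜, A '' S) + D) + (α * c) • Ω := by
        rw [add_assoc, add_assoc, add_comm ((α * c) • Ω) D]
    _ = Φ S + (α * c) • Ω := by rw [hΦ S]
    _ ⊆ (S + ε • Ω) + (α * c) • Ω := Set.add_subset_add_right hstop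
    _ = S + (ε • Ω + (α * c) • Ω) := by rw [add_assoc]
    _ = S + (ε + α * c) • Ω := by rw [hΩconv.add_smul hε (by positivity)]
    _ = E := by rw [key, hE]
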